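/- Suppose A_ℂ is semisimple with a complete set {(V_ρ, ρ)} of pairwise non-isomorphic finite-dimensional irreducible representations, such that for each ρ the central element z_ρ acts on V_ρ by a nonzero scalar α_ρ and acts by 0 on every V_η with η not isomorphic to ρ. Then for every a ∈ A_ℂ one has τ(a) = Σ_ρ α_ρ^{-1} · Tr(ρ(a)), the sum over the isomorphism classes of irreducible representations. -/

import Mathlib

open scoped BigOperators

/-- A fusion ring datum: finite index set `I`, unit index `zero`, duality involution `dual`,
and structure constants `N` satisfying associativity, unit, duality and symmetry axioms. -/
structure FusionData (I : Type*) [Fintype I] [DecidableEq I] where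
  zero : I
  dual : I → I
  N : I → I → I → ℕ
  dual_dual : ∀ i, dual (dual i) = i
  dual_zero : dual zero = zero
  assoc : ∀ i j k l, ∑ m, N i j m * N m k l = ∑ m, N j k m * N i m l
  unit_left : ∀ j m, N zero j m = if j = m then 1 else 0
  unit_right : ∀ i m, N i zero m = if i = m then 1 else 0
  duality : ∀ i j, N i j zero = if j = dual i then 1 else 0
  sym1 : ∀ i j m, N i j m = N j (dual m) (dual i)
  sym2 : ∀ i j m, N i j m = N (dual m) i (dual j)
  sym3 : ∀ i j m, N i j m = N (dual j) (dual i) (dual m)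

/-- If the complexified fusion ring `A` is semisimple with a complete set `{(V s, ρ s)}`
of pairwise non-isomorphic finite-dimensional irreducible representations, such that each
central element `z_{ρ s}` acts on `V s` by a nonzero scalar `α s` and by `0` on every `V t`
with `t ≠ s`, then `τ a = ∑ s, (α s)⁻¹ * Tr (ρ s a)` for all `a`. -/
theorem trace_decomposition {I : Type*} [Fintype I] [DecidableEq I]
    (F : FusionData I)
    {A : Type*} [Ring A] [Algebra ℂ A] [IsSemisimpleRing A] (b : Module.Basis I ℂ A)
    (hb1 : b F.zero = 1)
    (hbmul : ∀ i j, b i * b j = ∑ m, (F.N i j m : ℂ) • b m)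
    {S : Type*} [Fintype S] (V : S → Type*)
    [∀ s, AddCommGroup (V s)] [∀ s, Module ℂ (V s)]
    [∀ s, FiniteDimensional ℂ (V s)] [∀ s, Nontrivial (V s)]
    (ρ : ∀ s, A →ₐ[ℂ] Module.End ℂ (V s))
    -- each representation is irreducible
    (hirr : ∀ s, ∀ W : Submodule ℂ (V s), (∀ a : A, ∀ v ∈ W, ρ s a v ∈ W) → W = ⊥ ∨ W = ⊤)
    -- the representations are pairwise non-isomorphic
    (hnoniso : ∀ s t, s ≠ t →
      ¬ ∃ e : V s ≃ₗ[ℂ] V t, ∀ (a : A) (v : V s), e (ρ s a v) = ρ t a (e v))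
    -- the set of representations is complete: jointly they are faithful
    (hcomplete : Function.Injective fun a : A => fun s => ρ s a)
    (α : S → ℂ) (hα0 : ∀ s, α s ≠ 0)
    -- `z_{ρ s}` acts by the scalar `α s` on `V s`
    (hα : ∀ s, ρ s (∑ i, (LinearMap.trace ℂ (V s) (ρ s (b i))) • b (F.dual i))
            = α s • (1 : Module.End ℂ (V s)))
    -- and by `0` on every non-isomorphic irreducible, i.e. on `V t` for `t ≠ s`
    (hz0 : ∀ s t, s ≠ t →
      ρ t (∑ i, (LinearMap.trace ℂ (V s) (ρ s (b i))) • b (F.dual i)) = 0)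
    (a : A) :
    b.repr a F.zero = ∑ s, (α s)⁻¹ * LinearMap.trace ℂ (V s) (ρ s a) := by
  classical
  set z : A := ∑ s : S, (α s)⁻¹ • ∑ i, (LinearMap.trace ℂ (V s) (ρ s (b i))) • b (F.dual i)
    with hzdef
  have hz1 : z = 1 := by
    apply hcomplete
    funext t
    show ρ t z = ρ t 1
    rw [map_one, hzdef, map_sum, Finset.sum_eq_single t]
    · rw [map_smul, hα, smul_smul, inv_mul_cancel₀ (hα0 t), one_smul]
    · intro s _ hst
      rw [map_smul, hz0 s t hst, smul_zero]
    · intro h; exact absurd (Finset.mem_univ t) h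
  have hdualiff : ∀ i j : I, F.dual i = j ↔ i = F.dual j := by
    intro i j
    constructor
    · rintro rfl; rw [F.dual_dual]
    · rintro rfl; rw [F.dual_dual]
  have key : ∀ i : I, ∑ s, (α s)⁻¹ * LinearMap.trace ℂ (V s) (ρ s (b i))
      = if i = F.zero then 1 else 0 := by
    intro i
    have h1 : b.repr z (F.dual i) = ∑ s, (α s)⁻¹ * LinearMap.trace ℂ (V s) (ρ s (b i)) := by
      rw [hzdef, map_sum, Finsupp.coe_finset_sum, Finset.sum_apply]
      refine Finset.sum_congr rfl fun s _ => ?_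
      rw [map_smul, map_sum, Finsupp.smul_apply, Finsupp.coe_finset_sum, Finset.sum_apply]
      have : ∀ j : I, (b.repr (LinearMap.trace ℂ (V s) (ρ s (b j)) • b (F.dual j))) (F.dual i)
          = if j = i then LinearMap.trace ℂ (V s) (ρ s (b j)) else 0 := by
        intro j
        rw [map_smul, Finsupp.smul_apply, Module.Basis.repr_self, Finsupp.single_apply]
        have : (F.dual j = F.dual i) ↔ (j = i) := by
          constructor
          · intro h; have := congrArg F.dual h; rwa [F.dual_dual, F.dual_dual] at this
          · rintro rfl; rfl
        simp [this, smul_eq_mul]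
      simp_rw [this]
      rw [Finset.sum_ite_eq' Finset.univ i, if_pos (Finset.mem_univ i), smul_eq_mul]
    have h2 : b.repr z (F.dual i) = if i = F.zero then 1 else 0 := by
      rw [hz1, ← hb1, Module.Basis.repr_self, Finsupp.single_apply]
      have hiff : (F.zero = F.dual i) ↔ (i = F.zero) := by
        constructor
        · intro h
          have h' := congrArg F.dual h
          rw [F.dual_dual, F.dual_zero] at h'
          exact h'.symm
        · rintro rfl
          exact (F.dual_zero).symm
      simp only [hiff]
    rw [← h1, h2]
  have ha : (∑ i, b.repr a i • b i) = a := b.sum_repr a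
  calc b.repr a F.zero
      = ∑ i, b.repr a i * (if i = F.zero then 1 else 0) := by
        symm
        simp only [mul_ite, mul_one, mul_zero, Finset.sum_ite_eq', Finset.mem_univ, if_true]
    _ = ∑ i, b.repr a i * ∑ s, (α s)⁻¹ * LinearMap.trace ℂ (V s) (ρ s (b i)) := by
        simp_rw [key]
    _ = ∑ s, (α s)⁻¹ * LinearMap.trace ℂ (V s) (ρ s a) := by
        rw [← ha]
        simp_rw [Finset.mul_sum, map_sum, map_smul]
        rw [Finset.sum_comm]
        refine Finset.sum_congr rfl fun s _ => ?_
        rw [Finset.mul_sum]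
        refine Finset.sum_congr rfl fun i _ => ?_
        simp [smul_eq_mul]
        ring
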